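/- Fix p ∈ (0,1) and α_max(p) := Φ⁻¹(1 − p/2). Among all measurable sets A ⊆ ℝ with Gaussian measure ∫_A φ(t)dt = p, the maximum of ∫_A t²·φ(t)dt equals p + 2·α_max(p)·φ(α_max(p)), attained (up to null sets) by A = (−∞, −α_max(p)] ∪ [α_max(p), ∞). -/

import Mathlib

open MeasureTheory

/-- Standard normal pdf. -/
noncomputable def gpdf (x : ℝ) : ℝ := (Real.sqrt (2 * Real.pi))⁻¹ * Real.exp (-x ^ 2 / 2)

/-- Standard normal cdf. -/
noncomputable def gcdf (x : ℝ) : ℝ := ∫ t in Set.Iic x, gpdf t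

open Set Filter Real

lemma gpdf_eq (x : ℝ) : gpdf x = (Real.sqrt (2 * Real.pi))⁻¹ * Real.exp (-(1/2) * x ^ 2) := by
  rw [gpdf]; ring_nf

lemma gpdf_nonneg (x : ℝ) : 0 ≤ gpdf x := by
  rw [gpdf]
  positivity

lemma gpdf_continuous : Continuous gpdf := by
  unfold gpdf
  fun_prop

lemma gpdf_even (x : ℝ) : gpdf (-x) = gpdf x := by
  rw [gpdf, gpdf, neg_sq]

lemma integrable_gpdf : Integrable gpdf := by
  rw [funext gpdf_eq]
  exact (integrable_exp_neg_mul_sq (by norm_num : (0:ℝ) < 1/2)).const_mul _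

lemma integrable_sq_gpdf : Integrable (fun t : ℝ => t ^ 2 * gpdf t) := by
  have h : Integrable (fun t : ℝ => (Real.sqrt (2 * Real.pi))⁻¹ *
      (4 * Real.exp (-(1/4) * t ^ 2))) :=
    ((integrable_exp_neg_mul_sq (by norm_num : (0:ℝ) < 1/4)).const_mul 4).const_mul _
  refine h.mono' ?_ ?_
  · exact ((continuous_pow 2).mul gpdf_continuous).aestronglyMeasurable
  · filter_upwards with t
    rw [Real.norm_eq_abs, abs_of_nonneg (mul_nonneg (sq_nonneg t) (gpdf_nonneg t)), gpdf_eq]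
    have h1 : t ^ 2 ≤ 4 * Real.exp ((1/4) * t ^ 2) := by
      have := Real.add_one_le_exp ((1/4) * t ^ 2)
      nlinarith [Real.exp_pos ((1/4) * t ^ 2)]
    have h2 : (0:ℝ) ≤ (Real.sqrt (2 * Real.pi))⁻¹ := by positivity
    have h3 : 4 * Real.exp ((1/4) * t^2) * Real.exp (-(1/2) * t ^ 2)
        = 4 * Real.exp (-(1/4) * t ^ 2) := by
      rw [mul_assoc, ← Real.exp_add]; ring_nf
    calc t ^ 2 * ((Real.sqrt (2 * Real.pi))⁻¹ * Real.exp (-(1/2) * t ^ 2))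
        ≤ (4 * Real.exp ((1/4) * t ^ 2)) * ((Real.sqrt (2 * Real.pi))⁻¹ * Real.exp (-(1/2) * t ^ 2)) := by
          apply mul_le_mul_of_nonneg_right h1 (by positivity)
      _ = (Real.sqrt (2 * Real.pi))⁻¹ * (4 * Real.exp (-(1/4) * t ^ 2)) := by
          rw [← h3]; ring

lemma integral_gpdf : ∫ t : ℝ, gpdf t = 1 := by
  simp_rw [gpdf_eq]
  rw [integral_const_mul, integral_gaussian]
  rw [inv_mul_eq_one₀]
  · congr 1
    field_simp
  · positivity

lemma hasDerivAt_gpdf (x : ℝ) : HasDerivAt gpdf (-x * gpdf x) x := by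
  have h : HasDerivAt (fun t : ℝ => -t ^ 2 / 2) (-x) x := by
    have := ((hasDerivAt_pow 2 x).neg).div_const 2
    refine this.congr_deriv ?_
    push_cast; ring
  have := (h.exp).const_mul (Real.sqrt (2 * Real.pi))⁻¹
  refine this.congr_deriv ?_
  rw [gpdf]; ring

lemma tendsto_neg_mul_gpdf : Tendsto (fun t : ℝ => -t * gpdf t) atTop (nhds 0) := by
  have h := (rpow_mul_exp_neg_mul_sq_isLittleO_exp_neg (by norm_num : (0:ℝ) < 1/2) 1)
  have h2 : Tendsto (fun x : ℝ => Real.exp (-(1/2) * x)) atTop (nhds 0) := by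
    have : Tendsto (fun x : ℝ => (1/2) * x) atTop atTop :=
      Tendsto.const_mul_atTop (by norm_num) tendsto_id
    refine (Real.tendsto_exp_neg_atTop_nhds_zero.comp this).congr fun x => ?_
    simp only [Function.comp]
    norm_num
  have h3 : Tendsto (fun x : ℝ => x ^ (1:ℝ) * Real.exp (-(1/2) * x ^ 2)) atTop (nhds 0) :=
    h.tendsto_zero_of_tendsto h2
  have h4 : Tendsto (fun x : ℝ => x * Real.exp (-(1/2) * x ^ 2)) atTop (nhds 0) := by
    simpa [Real.rpow_one] using h3
  have h5 := (h4.const_mul (-(Real.sqrt (2 * Real.pi))⁻¹))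
  rw [mul_zero] at h5
  refine h5.congr (fun x => ?_)
  rw [gpdf_eq]; ring

lemma integral_Ioi_sq_gpdf (a : ℝ) :
    ∫ t in Ioi a, t ^ 2 * gpdf t = a * gpdf a + ∫ t in Ioi a, gpdf t := by
  have hderiv : ∀ x ∈ Ici a, HasDerivAt (fun t => -t * gpdf t)
      (x ^ 2 * gpdf x - gpdf x) x := by
    intro x _
    have := (hasDerivAt_id x).neg.mul (hasDerivAt_gpdf x)
    refine this.congr_deriv ?_
    simp; ring
  have hint : IntegrableOn (fun x : ℝ => x ^ 2 * gpdf x - gpdf x) (Ioi a) :=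
    (integrable_sq_gpdf.sub integrable_gpdf).integrableOn
  have h := integral_Ioi_of_hasDerivAt_of_tendsto' hderiv hint tendsto_neg_mul_gpdf
  rw [integral_sub integrable_sq_gpdf.integrableOn integrable_gpdf.integrableOn] at h
  rw [zero_sub] at h
  linarith [h]

lemma integral_Iic_neg_gpdf (a : ℝ) : ∫ t in Iic (-a), gpdf t = ∫ t in Ioi a, gpdf t := by
  rw [← integral_comp_neg_Ioi]
  simp_rw [gpdf_even]

lemma integral_Iic_neg_sq_gpdf (a : ℝ) :
    ∫ t in Iic (-a), t ^ 2 * gpdf t = ∫ t in Ioi a, t ^ 2 * gpdf t := by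
  rw [← integral_comp_neg_Ioi]
  simp_rw [gpdf_even, neg_sq]

lemma gcdf_add_Ioi (a : ℝ) : gcdf a + ∫ t in Ioi a, gpdf t = 1 := by
  rw [gcdf, intervalIntegral.integral_Iic_add_Ioi integrable_gpdf.integrableOn
    integrable_gpdf.integrableOn, integral_gpdf]

lemma gcdf_mono : Monotone gcdf := by
  intro x y hxy
  exact setIntegral_mono_set integrable_gpdf.integrableOn
    (Filter.Eventually.of_forall gpdf_nonneg) (HasSubset.Subset.eventuallyLE (Iic_subset_Iic.2 hxy))

lemma gcdf_zero : gcdf 0 = 1 / 2 := by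
  have h1 := gcdf_add_Ioi 0
  have h2 : gcdf 0 = ∫ t in Ioi (0:ℝ), gpdf t := by
    rw [gcdf, ← neg_zero, integral_Iic_neg_gpdf, neg_zero]
  linarith

/-- Fix p ∈ (0,1) and α = Φ⁻¹(1 − p/2), i.e. Φ(α) = 1 − p/2.
Among all measurable A ⊆ ℝ with Gaussian measure ∫_A φ = p, the maximum of
∫_A t²φ(t)dt equals p + 2αφ(α), attained by A = (−∞, −α] ∪ [α, ∞). -/
theorem stmt11 (p : ℝ) (hp : p ∈ Set.Ioo (0 : ℝ) 1) (α : ℝ)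
    (hα : gcdf α = 1 - p / 2) :
    (∀ A : Set ℝ, MeasurableSet A → (∫ t in A, gpdf t) = p →
        (∫ t in A, t ^ 2 * gpdf t) ≤ p + 2 * α * gpdf α) ∧
      (∫ t in Set.Iic (-α) ∪ Set.Ici α, gpdf t) = p ∧
      (∫ t in Set.Iic (-α) ∪ Set.Ici α, t ^ 2 * gpdf t) = p + 2 * α * gpdf α := by
  obtain ⟨hp0, hp1⟩ := hp
  have hα_pos : 0 < α := by
    by_contra h
    push_neg at h
    have := gcdf_mono h
    rw [hα, gcdf_zero] at this
    linarith
  have hIoi : ∫ t in Ioi α, gpdf t = p / 2 := by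
    have := gcdf_add_Ioi α
    rw [hα] at this; linarith
  have hIci : ∫ t in Ici α, gpdf t = p / 2 := by
    rw [integral_Ici_eq_integral_Ioi, hIoi]
  have hIciSq : ∫ t in Ici α, t ^ 2 * gpdf t = α * gpdf α + p / 2 := by
    rw [integral_Ici_eq_integral_Ioi, integral_Ioi_sq_gpdf, hIoi]
  have hdisj : Disjoint (Iic (-α)) (Ici α) :=
    Iic_disjoint_Ici.2 (by intro h; linarith)
  have hB : MeasurableSet (Iic (-α) ∪ Ici α) :=
    measurableSet_Iic.union measurableSet_Ici
  have hBint : (∫ t in Iic (-α) ∪ Ici α, gpdf t) = p := by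
    rw [setIntegral_union hdisj measurableSet_Ici integrable_gpdf.integrableOn
      integrable_gpdf.integrableOn, integral_Iic_neg_gpdf, hIoi, hIci]
    ring
  have hBsq : (∫ t in Iic (-α) ∪ Ici α, t ^ 2 * gpdf t) = p + 2 * α * gpdf α := by
    rw [setIntegral_union hdisj measurableSet_Ici integrable_sq_gpdf.integrableOn
      integrable_sq_gpdf.integrableOn, integral_Iic_neg_sq_gpdf,
      ← integral_Ici_eq_integral_Ioi, hIciSq]
    ring
  refine ⟨?_, hBint, hBsq⟩
  intro A hAmeas hAp
  set B : Set ℝ := Iic (-α) ∪ Ici α with hBdef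
  -- decompose integrals
  have hdecA : ∀ f : ℝ → ℝ, Integrable f →
      (∫ t in A, f t) = (∫ t in A ∩ B, f t) + ∫ t in A \ B, f t := by
    intro f hf
    rw [integral_inter_add_diff hB hf.integrableOn]
  have hdecB : ∀ f : ℝ → ℝ, Integrable f →
      (∫ t in B, f t) = (∫ t in A ∩ B, f t) + ∫ t in B \ A, f t := by
    intro f hf
    rw [Set.inter_comm, integral_inter_add_diff hAmeas hf.integrableOn]
  have heq : (∫ t in A \ B, gpdf t) = ∫ t in B \ A, gpdf t := by
    have h1 := hdecA gpdf integrable_gpdf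
    have h2 := hdecB gpdf integrable_gpdf
    rw [hAp] at h1
    rw [hBint] at h2
    linarith
  have hABc : ∀ t ∈ A \ B, t ^ 2 ≤ α ^ 2 := by
    intro t ht
    obtain ⟨_, htB⟩ := ht
    simp only [hBdef, Set.mem_union, Set.mem_Iic, Set.mem_Ici, not_or, not_le] at htB
    nlinarith [htB.1, htB.2]
  have hBAc : ∀ t ∈ B \ A, α ^ 2 ≤ t ^ 2 := by
    intro t ht
    obtain ⟨htB, _⟩ := ht
    simp only [hBdef, Set.mem_union, Set.mem_Iic, Set.mem_Ici] at htB
    rcases htB with h | h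
    · nlinarith
    · nlinarith
  have hmeasAB : MeasurableSet (A \ B) := hAmeas.diff hB
  have hmeasBA : MeasurableSet (B \ A) := hB.diff hAmeas
  have step1 : (∫ t in A \ B, t ^ 2 * gpdf t) ≤ α ^ 2 * ∫ t in A \ B, gpdf t := by
    rw [← integral_const_mul]
    refine setIntegral_mono_on integrable_sq_gpdf.integrableOn
      (integrable_gpdf.integrableOn.const_mul _) hmeasAB ?_
    intro t ht
    exact mul_le_mul_of_nonneg_right (hABc t ht) (gpdf_nonneg t)
  have step2 : α ^ 2 * (∫ t in B \ A, gpdf t) ≤ ∫ t in B \ A, t ^ 2 * gpdf t := by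
    rw [← integral_const_mul]
    refine setIntegral_mono_on (integrable_gpdf.integrableOn.const_mul _)
      integrable_sq_gpdf.integrableOn hmeasBA ?_
    intro t ht
    exact mul_le_mul_of_nonneg_right (hBAc t ht) (gpdf_nonneg t)
  have h1 := hdecA (fun t => t ^ 2 * gpdf t) integrable_sq_gpdf
  have h2 := hdecB (fun t => t ^ 2 * gpdf t) integrable_sq_gpdf
  rw [hBsq] at h2
  rw [heq] at step1
  linarith
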